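/- (Sparsity of minimizers) Let A : ℓ² → Y be bounded linear, α > β > 0, y ∈ Y. Every minimizer x of J(x) = ½‖Ax − y‖² + α‖x‖₁² − β‖x‖₂² has finite support, i.e., the set {i : xᵢ ≠ 0} is finite. -/

import Mathlib

set_option maxHeartbeats 1000000
open scoped RealInnerProductSpace


/-- Sparsity of minimizers: if `α > β > 0` and `x` minimizes
`J(z) = ½‖Az − y‖² + α‖z‖₁² − β‖z‖₂²` on `ℓ²`, then `x` has finite support. -/
theorem stmt_8 {Y : Type*} [NormedAddCommGroup Y] [InnerProductSpace ℝ Y]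
    (A : lp (fun _ : ℕ => ℝ) 2 →L[ℝ] Y) (y : Y) (α β : ℝ) (hβ : 0 < β) (hαβ : β < α)
    (x : lp (fun _ : ℕ => ℝ) 2)
    (hx1 : Summable (fun i => |x i|))
    (hmin : ∀ z : lp (fun _ : ℕ => ℝ) 2, Summable (fun i => |z i|) →
      (1 / 2) * ‖A x - y‖ ^ 2 + α * (∑' i, |x i|) ^ 2 - β * ‖x‖ ^ 2
        ≤ (1 / 2) * ‖A z - y‖ ^ 2 + α * (∑' i, |z i|) ^ 2 - β * ‖z‖ ^ 2) :
    {i : ℕ | x i ≠ 0}.Finite := by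
  have hα : 0 < α := hβ.trans hαβ
  set e : ℕ → lp (fun _ : ℕ => ℝ) 2 := fun i => lp.single 2 i (1 : ℝ) with he
  have honb : Orthonormal ℝ e := by
    rw [orthonormal_iff_ite]
    intro i j
    rw [he, lp.inner_single_left]
    simp [lp.single_apply, RCLike.inner_apply, Pi.single_apply]
  set S : ℝ := ∑' i, |x i| with hSdef
  have hS0 : 0 ≤ S := tsum_nonneg fun i => abs_nonneg _
  set u : Y := A x - y with hu
  set v : ℕ → ℝ := fun i => ⟪A (e i), u⟫ with hv
  set C : ℝ := α + β + ‖A‖ ^ 2 / 2 with hC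
  have hCpos : 0 < C := by positivity
  -- key inequality from minimality
  have hkey : ∀ i : ℕ, 2 * α * S * |x i| ≤ |x i| * |v i| + C * (x i) ^ 2 := by
    intro i
    set δ : lp (fun _ : ℕ => ℝ) 2 := lp.single 2 i (x i) with hδ
    set z : lp (fun _ : ℕ => ℝ) 2 := x - δ with hz
    have hzco : ∀ j, z j = if j = i then 0 else x j := by
      intro j
      have h : z j = x j - δ j := congrFun (lp.coeFn_sub x δ) j
      rcases eq_or_ne j i with rfl | hji
      · simp [h, hδ, lp.single_apply_self]
      · simp [h, hδ, lp.single_apply_ne _ _ _ hji, hji]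
    have habs : (fun j => |z j|) = fun j => if j = i then 0 else |x j| := by
      funext j
      rw [hzco j]
      split_ifs <;> simp
    have hzsummable : Summable fun j => |z j| := by
      rw [habs]
      refine Summable.of_nonneg_of_le (fun j => by positivity) (fun j => ?_) hx1
      split_ifs <;> simp [abs_nonneg]
    have htsum : ∑' j, |z j| = S - |x i| := by
      have h1 := Summable.tsum_eq_add_tsum_ite hx1 i
      rw [habs]
      rw [hSdef]
      linarith [h1]
    have hinner_xδ : ⟪x, δ⟫ = x i * x i := by
      rw [hδ, lp.inner_single_right]
      simp [RCLike.inner_apply]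
      ring
    have hδnorm : ‖δ‖ = |x i| := by
      have := lp.norm_single (p := 2) (E := fun _ : ℕ => ℝ) (by norm_num) i (x i)
      simpa [hδ] using this
    have hznorm : ‖z‖ ^ 2 = ‖x‖ ^ 2 - (x i) ^ 2 := by
      rw [hz, norm_sub_sq_real, hinner_xδ, hδnorm, sq_abs]
      ring
    have hδe : δ = x i • e i := by
      rw [hδ, he]
      rw [← lp.single_smul]
      norm_num
    have hAz : A z - y = u - A δ := by
      rw [hz, map_sub, hu]; abel
    have hinner_uAδ : ⟪u, A δ⟫ = x i * v i := by
      rw [hδe, map_smul, real_inner_smul_right, hv]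
      rw [real_inner_comm]
    have hAδ : ‖A δ‖ ≤ ‖A‖ * |x i| := by
      calc ‖A δ‖ ≤ ‖A‖ * ‖δ‖ := A.le_opNorm δ
        _ = ‖A‖ * |x i| := by rw [hδnorm]
    have hAδsq : ‖A δ‖ ^ 2 ≤ ‖A‖ ^ 2 * (x i) ^ 2 := by
      nlinarith [norm_nonneg (A δ), norm_nonneg A, abs_nonneg (x i), sq_abs (x i)]
    have hAznorm : ‖A z - y‖ ^ 2 = ‖u‖ ^ 2 - 2 * (x i * v i) + ‖A δ‖ ^ 2 := by
      rw [hAz, norm_sub_sq_real, hinner_uAδ]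
    have hm := hmin z hzsummable
    rw [htsum, hznorm, hAznorm] at hm
    have habs1 : -(x i * v i) ≤ |x i| * |v i| := by
      rw [← abs_mul]; exact neg_le_abs _
    have hsq : |x i| ^ 2 = x i ^ 2 := sq_abs _
    have hexp : α * (S - |x i|) ^ 2
        = α * S ^ 2 - 2 * α * S * |x i| + α * (x i) ^ 2 := by
      have : (S - |x i|) ^ 2 = S ^ 2 - 2 * S * |x i| + |x i| ^ 2 := by ring
      rw [this, hsq]; ring
    rw [hexp] at hm
    rw [hC]
    linarith [hm, habs1, hAδsq]
  rcases hS0.eq_or_lt with hSzero | hSpos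
  · -- S = 0, so x = 0
    have hx0 : ∀ i, x i = 0 := by
      intro i
      have h1 : |x i| ≤ S := Summable.le_tsum hx1 i fun j _ => abs_nonneg _
      rw [← hSzero] at h1
      exact abs_eq_zero.mp (le_antisymm h1 (abs_nonneg _))
    have hempty : {i : ℕ | x i ≠ 0} = ∅ := Set.eq_empty_iff_forall_notMem.mpr
      fun i hi => hi (hx0 i)
    rw [hempty]; exact Set.finite_empty
  · -- S > 0
    have hdiv : ∀ i, x i ≠ 0 → 2 * α * S ≤ |v i| + C * |x i| := by
      intro i hxi
      have hxpos : 0 < |x i| := abs_pos.mpr hxi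
      nlinarith [hkey i, sq_abs (x i)]
    have hsub : {i : ℕ | x i ≠ 0} ⊆ {i | α * S ≤ |v i|} ∪ {i | α * S ≤ C * |x i|} := by
      intro i hi
      by_contra h
      simp only [Set.mem_union, Set.mem_setOf_eq, not_or, not_le] at h
      have := hdiv i hi
      linarith [h.1, h.2]
    refine Set.Finite.subset (Set.Finite.union ?_ ?_) hsub
    · -- V finite via Bessel-type bound
      by_contra hV
      have hVinf : {i | α * S ≤ |v i|}.Infinite := hV
      set K : ℝ := ‖A‖ * ‖u‖ with hK
      have hαS : 0 < α * S := by positivity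
      obtain ⟨n, hn⟩ := exists_nat_gt (K ^ 2 / (α * S) ^ 2)
      have hn2 : K ^ 2 < n * (α * S) ^ 2 := by
        rw [div_lt_iff₀ (by positivity)] at hn
        linarith
      obtain ⟨F, hFsub, hFcard⟩ := hVinf.exists_subset_card_eq n
      have hbessel : ∑ i ∈ F, (v i) ^ 2 ≤ K ^ 2 := by
        set w : lp (fun _ : ℕ => ℝ) 2 := ∑ i ∈ F, v i • e i with hw
        have hwnorm : ‖w‖ ^ 2 = ∑ i ∈ F, (v i) ^ 2 := by
          rw [hw, ← real_inner_self_eq_norm_sq, honb.inner_sum v v F]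
          simp [sq]
        have hAw : ⟪A w, u⟫ = ∑ i ∈ F, (v i) ^ 2 := by
          rw [hw, map_sum, sum_inner]
          refine Finset.sum_congr rfl fun i _ => ?_
          rw [map_smul, real_inner_smul_left]
          simp only [hv]
          ring
        have hCS : ⟪A w, u⟫ ≤ ‖A w‖ * ‖u‖ := real_inner_le_norm _ _
        have hAwle : ‖A w‖ ≤ ‖A‖ * ‖w‖ := A.le_opNorm w
        have hP : ∑ i ∈ F, (v i) ^ 2 ≤ K * ‖w‖ := by
          rw [← hAw]
          calc ⟪A w, u⟫ ≤ ‖A w‖ * ‖u‖ := hCS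
            _ ≤ (‖A‖ * ‖w‖) * ‖u‖ := by
                have := norm_nonneg u
                nlinarith
            _ = K * ‖w‖ := by rw [hK]; ring
        nlinarith [norm_nonneg w, sq_nonneg (‖w‖ - K), hwnorm, hP]
      have hlower : (n : ℝ) * (α * S) ^ 2 ≤ ∑ i ∈ F, (v i) ^ 2 := by
        have : ∀ i ∈ F, (α * S) ^ 2 ≤ (v i) ^ 2 := by
          intro i hiF
          have hi : α * S ≤ |v i| := hFsub hiF
          nlinarith [abs_nonneg (v i), sq_abs (v i)]
        calc (n : ℝ) * (α * S) ^ 2 = ∑ _i ∈ F, (α * S) ^ 2 := by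
              rw [Finset.sum_const, hFcard]; ring
          _ ≤ ∑ i ∈ F, (v i) ^ 2 := Finset.sum_le_sum this
      linarith
    · -- W finite by summability
      have hev : ∀ᶠ i in Filter.cofinite, |x i| < α * S / C :=
        hx1.tendsto_cofinite_zero.eventually (eventually_lt_nhds (by positivity))
      rw [Filter.eventually_cofinite] at hev
      refine hev.subset fun i hi => ?_
      simp only [Set.mem_setOf_eq, not_lt] at *
      rw [div_le_iff₀ hCpos]
      linarith [hi]
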